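/- arXiv:1404.4906 — 4 statements merged into one kernel-verified Lean document; each statement's English description precedes it below -/
import Mathlib

section
/- For any function x defined on integers ≥ a, any positive integer m, and any integer t ≥ a + m, the discrete Taylor formula holds: x(t) = Σ_{k=0}^{m-1} ((t-a)^((k))/k!) · Δᵏx(a) + (1/(m-1)!) · Σ_{s=a}^{t-m} (t-s-1)^((m-1)) · Δᵐx(s). -/
/-- Forward difference operator `Δx(t) = x(t+1) - x(t)`. -/
def fwdDiffZ (x : ℤ → ℝ) : ℤ → ℝ := fun t => x (t + 1) - x t

open Finset

/-- Peel the bottom element off an integer `Icc` sum. -/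
lemma sum_Icc_bot (f : ℤ → ℝ) {a b : ℤ} (h : a ≤ b) :
    ∑ s ∈ Icc a b, f s = f a + ∑ s ∈ Icc (a+1) b, f s := by
  have h1 : Icc (a+1) b = Ioc a b := by ext x; simp
  rw [h1, ← Finset.Ioc_insert_left h, Finset.sum_insert (by simp)]

/-- Peel the top element off an integer `Icc` sum. -/
lemma sum_Icc_top (f : ℤ → ℝ) {a b : ℤ} (h : a ≤ b) :
    ∑ s ∈ Icc a b, f s = (∑ s ∈ Icc a (b-1), f s) + f b := by
  have h1 : Icc a (b-1) = Ico a b := by ext x; simp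
  rw [h1, ← Finset.Ico_insert_right h, Finset.sum_insert (by simp), add_comm]

/-- The real-valued falling factorial `j^((k))` for integer `j`. -/
noncomputable def D (j : ℤ) (k : ℕ) : ℝ := (Nat.descFactorial j.toNat k : ℝ)

lemma D_self_nat (k : ℕ) : D (k : ℤ) k = (Nat.factorial k : ℝ) := by
  simp [D, Nat.descFactorial_self]

lemma D_step (j : ℤ) (hj : 0 ≤ j) (k : ℕ) :
    D (j+1) (k+1) = D j (k+1) + (k+1) * D j k := by
  have h1 : (j+1).toNat = j.toNat + 1 := by omega
  rw [D, D, D, h1, Nat.succ_descFactorial_succ, Nat.descFactorial_succ]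
  rcases le_or_gt k j.toNat with h | h
  · push_cast
    have : (j.toNat : ℝ) - k + (k+1) = (j.toNat + 1 : ℕ) := by push_cast; ring
    rw [Nat.cast_sub h]
    push_cast
    ring
  · rw [Nat.descFactorial_eq_zero_iff_lt.2 h]
    ring


/-- Summation by parts for the discrete Taylor remainder. -/
lemma key (y : ℤ → ℝ) (p : ℕ) (a t : ℤ) (h : a + (p+1) ≤ t) :
    (1 / (Nat.factorial p : ℝ)) * ∑ s ∈ Icc a (t - (p+1)), D (t - s - 1) p * y s
    = D (t - a) (p+1) / (Nat.factorial (p+1) : ℝ) * y a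
      + (1 / (Nat.factorial (p+1) : ℝ)) *
          ∑ s ∈ Icc a (t - (p+1) - 1), D (t - s - 1) (p+1) * (y (s+1) - y s) := by
  obtain ⟨n, hn⟩ : ∃ n : ℕ, a = t - (p+1) - n := ⟨(t - (p+1) - a).toNat, by omega⟩
  clear h
  induction n generalizing a with
  | zero =>
    have ha : a = t - (p+1) := by omega
    subst ha
    rw [Finset.Icc_self, Finset.sum_singleton,
      Finset.Icc_eq_empty (by omega), Finset.sum_empty]
    have h1 : t - (t - (p+1)) - 1 = (p : ℤ) := by ring
    have h2 : t - (t - (p+1)) = ((p+1 : ℕ) : ℤ) := by push_cast; ring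
    rw [h1, h2, D_self_nat, D_self_nat]
    have hp : (Nat.factorial p : ℝ) ≠ 0 := by positivity
    have hp1 : (Nat.factorial (p+1) : ℝ) ≠ 0 := by positivity
    field_simp
    ring
  | succ n ih =>
    have ha1 : a + 1 = t - (p+1) - n := by omega
    have hIH := ih (a+1) ha1
    rw [sum_Icc_bot _ (by omega : a ≤ t - (p+1)),
        sum_Icc_bot (fun s => D (t - s - 1) (p+1) * (y (s+1) - y s))
          (by omega : a ≤ t - (p+1) - 1)]
    rw [mul_add, hIH]
    have e1 : t - (a+1) = t - a - 1 := by ring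
    rw [e1]
    -- key identity: D (t-a) (p+1) = D (t-a-1) (p+1) + (p+1) * D (t-a-1) p
    have hD := D_step (t - a - 1) (by omega) p
    have e2 : t - a - 1 + 1 = t - a := by ring
    rw [e2] at hD
    rw [hD]
    have hp : (Nat.factorial p : ℝ) ≠ 0 := by positivity
    have hp1 : (Nat.factorial (p+1) : ℝ) ≠ 0 := by positivity
    have hfac : (Nat.factorial (p+1) : ℝ) = (p+1) * Nat.factorial p := by
      rw [Nat.factorial_succ]; push_cast; ring
    rw [hfac]
    field_simp
    ring

/-- Telescoping sum. -/
lemma tele (x : ℤ → ℝ) (a : ℤ) :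
    ∀ t, a + 1 ≤ t → x t = x a + ∑ s ∈ Icc a (t-1), (x (s+1) - x s) := by
  refine Int.le_induction ?_ ?_
  · simp
  · intro t ht ih
    rw [show t + 1 - 1 = t by ring, sum_Icc_top _ (by omega : a ≤ t)]
    rw [← add_assoc, ← ih]
    ring

/-- Discrete Taylor formula: for `x : ℤ → ℝ`, `m ≥ 1`, and `t ≥ a + m`,
`x(t) = Σ_{k=0}^{m-1} ((t-a)^((k))/k!) Δᵏx(a)
      + (1/(m-1)!) Σ_{s=a}^{t-m} (t-s-1)^((m-1)) Δᵐx(s)`. -/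
theorem discrete_taylor (x : ℤ → ℝ) (m : ℕ) (hm : 1 ≤ m) (a t : ℤ) (ht : a + m ≤ t) :
    x t =
      (∑ k ∈ Finset.range m,
        ((Nat.descFactorial (t - a).toNat k : ℝ) / (Nat.factorial k : ℝ)) *
          (fwdDiffZ^[k] x a)) +
      (1 / (Nat.factorial (m - 1) : ℝ)) *
        ∑ s ∈ Finset.Icc a (t - m),
          ((Nat.descFactorial (t - s - 1).toNat (m - 1) : ℝ)) * (fwdDiffZ^[m] x s) := by
  obtain ⟨p, rfl⟩ : ∃ p, m = p + 1 := ⟨m - 1, by omega⟩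
  clear hm
  induction p generalizing t with
  | zero =>
    have ht' : a + 1 ≤ t := by push_cast at ht; omega
    rw [tele x a t ht']
    norm_num [fwdDiffZ, Function.iterate_one]
  | succ p ih =>
    have hx := ih t (by push_cast at ht ⊢; omega)
    rw [hx]
    have hkey := key (fwdDiffZ^[p+1] x) p a t (by push_cast at ht ⊢; omega)
    simp only [D] at hkey
    simp only [Nat.add_sub_cancel, Finset.sum_range_succ]
    have hb : t - ((p:ℕ)+1+1 : ℕ) = t - ((p:ℤ)+1) - 1 := by push_cast; ring
    have hb2 : t - ((p:ℕ)+1 : ℕ) = t - ((p:ℤ)+1) := by push_cast; ring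
    have hit : ∀ s : ℤ, fwdDiffZ^[p+1+1] x s
        = fwdDiffZ^[p+1] x (s+1) - fwdDiffZ^[p+1] x s := by
      intro s
      rw [Function.iterate_succ_apply']
      rfl
    rw [hb, hb2]
    simp only [hit]
    rw [hkey]
    ring
end

section
/- Let G: ℝ → ℝ and define xₙ by the explicit memory formula x_{n+1} = x₀ + p₁(n+1) - Σ_{s=0}^{n-1} (n-s)·G(x_{s+1}) for n ≥ 0. Define pₙ = x_n - x_{n-1} for n ≥ 1. Then pₙ and xₙ satisfy the 2D Universal Map recursion: p_{n+1} = pₙ - G(xₙ) and x_{n+1} = xₙ + p_{n+1} for all n ≥ 1. -/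
/-- The explicit memory (sum) form of the `α = 2` Universal Map,
`x_{n+1} = x₀ + p₁(n+1) - Σ_{s=0}^{n-1} (n-s) G(x_{s+1})`, with `pₙ = xₙ - x_{n-1}`,
satisfies the 2D Universal Map recursion `p_{n+1} = pₙ - G(xₙ)`,
`x_{n+1} = xₙ + p_{n+1}` for all `n ≥ 1`. -/
theorem universal_map_recursion_form (G : ℝ → ℝ) (x p : ℕ → ℝ) (p₁ : ℝ)
    (hx : ∀ n : ℕ, x (n + 1) =
      x 0 + p₁ * ((n : ℝ) + 1) -
        ∑ s ∈ Finset.range n, ((n : ℝ) - (s : ℝ)) * G (x (s + 1)))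
    (hp : ∀ n : ℕ, 1 ≤ n → p n = x n - x (n - 1)) :
    ∀ n : ℕ, 1 ≤ n → p (n + 1) = p n - G (x n) ∧ x (n + 1) = x n + p (n + 1) := by
  have hd : ∀ n : ℕ, x (n + 1) - x n = p₁ - ∑ s ∈ Finset.range n, G (x (s + 1)) := by
    intro n
    cases n with
    | zero => simp [hx 0]
    | succ m =>
      have h1 := hx (m + 1)
      have h2 := hx m
      have hsum : ∑ s ∈ Finset.range (m + 1), (((m : ℕ) + 1 : ℝ) - (s : ℝ)) * G (x (s + 1)) =
          (∑ s ∈ Finset.range m, ((m : ℝ) - (s : ℝ)) * G (x (s + 1))) +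
            ∑ s ∈ Finset.range (m + 1), G (x (s + 1)) := by
        calc ∑ s ∈ Finset.range (m + 1), (((m : ℕ) + 1 : ℝ) - (s : ℝ)) * G (x (s + 1))
            = ∑ s ∈ Finset.range (m + 1),
                (((m : ℝ) - (s : ℝ)) * G (x (s + 1)) + G (x (s + 1))) := by
              apply Finset.sum_congr rfl; intro s _; ring
          _ = (∑ s ∈ Finset.range (m + 1), ((m : ℝ) - (s : ℝ)) * G (x (s + 1))) +
                ∑ s ∈ Finset.range (m + 1), G (x (s + 1)) := Finset.sum_add_distrib
          _ = (∑ s ∈ Finset.range m, ((m : ℝ) - (s : ℝ)) * G (x (s + 1))) +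
                ∑ s ∈ Finset.range (m + 1), G (x (s + 1)) := by
              rw [Finset.sum_range_succ]; simp
      push_cast at h1 h2 hsum
      rw [h1, h2, hsum]
      ring
  intro n hn
  obtain ⟨m, rfl⟩ := Nat.exists_eq_add_of_le hn
  have hpn1 := hp (1 + m + 1) (by omega)
  have hpn := hp (1 + m) (by omega)
  have e1 : 1 + m + 1 - 1 = 1 + m := by omega
  have e2 : 1 + m - 1 = m := by omega
  rw [e1] at hpn1
  rw [e2] at hpn
  have hdn := hd (1 + m)
  have hdm := hd m
  have hm1 : m + 1 = 1 + m := by omega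
  constructor
  · rw [hpn1, hpn, hdn, ← hm1, hd m, Finset.sum_range_succ, hm1]
    ring
  · rw [hpn1]; ring
end

section
/- Semigroup-type identity for integer-order fractional sums: for positive integers m, n, any integer a, any function f on integers ≥ a, and any integer t ≥ a + m + n, applying the order-m Miller–Ross sum to the order-n Miller–Ross sum of f yields the order-(m+n) Miller–Ross sum: _aΔ^{-m}(_aΔ^{-n} f)(t) = _aΔ^{-(m+n)} f(t). -/
/-- The integer-order Miller–Ross fractional sum written with binomial kernel:
`_aΔ^{-n}_t f(t) = Σ_{s=a}^{t-n} C(t-s-1, n-1) f(s)`. -/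
noncomputable def millerRossSum (a : ℤ) (n : ℕ) (f : ℤ → ℝ) (t : ℤ) : ℝ :=
  ∑ s ∈ Finset.Icc a (t - n), (Nat.choose (t - s - 1).toNat (n - 1) : ℝ) * f s

open Finset in
lemma hs (p : ℕ) : ∀ J, ∑ j ∈ range (J+1), (p+j).choose p = (p+1+J).choose (p+1) := by
  intro J
  induction J with
  | zero => simp
  | succ J ih =>
      rw [Finset.sum_range_succ, ih, show p+1+(J+1) = (p+1+J)+1 from by ring,
        Nat.choose_succ_succ', show p+(J+1) = p+1+J from by ring]
      omega

open Finset in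
lemma conv (p : ℕ) : ∀ q J, ∑ j ∈ range (J+1), (p+j).choose p * (q+(J-j)).choose q
    = (p+q+1+J).choose (p+q+1) := by
  intro q
  induction q with
  | zero => intro J; simpa using hs p J
  | succ q ihq =>
      intro J
      induction J with
      | zero => simp
      | succ J ihJ =>
          rw [Finset.sum_range_succ]
          have h1 : ∀ j ∈ range (J+1),
              (p+j).choose p * (q+1+(J+1-j)).choose (q+1)
              = (p+j).choose p * (q+(J+1-j)).choose q
                + (p+j).choose p * (q+1+(J-j)).choose (q+1) := by
            intro j hj
            rw [Finset.mem_range] at hj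
            have e1 : q+1+(J+1-j) = (q + (J+1-j)) + 1 := by omega
            have e2 : q+1+(J-j) = q + (J+1-j) := by omega
            rw [e1, Nat.choose_succ_succ', e2, Nat.mul_add]
          rw [Finset.sum_congr rfl h1, Finset.sum_add_distrib, ihJ]
          have h2 : ∑ j ∈ range (J+1), (p+j).choose p * (q+(J+1-j)).choose q
              = (p+q+1+(J+1)).choose (p+q+1) - (p+(J+1)).choose p ∧
              (p+(J+1)).choose p ≤ (p+q+1+(J+1)).choose (p+q+1) := by
            have h := ihq (J+1)
            rw [Finset.sum_range_succ] at h
            simp only [Nat.sub_self, Nat.add_zero, Nat.choose_self, Nat.mul_one] at h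
            omega
          rw [h2.1]
          have pas : (p+(q+1)+1+(J+1)).choose (p+(q+1)+1)
              = (p+q+1+(J+1)).choose (p+q+1) + (p+q+2+J).choose (p+q+2) := by
            rw [show p+(q+1)+1+(J+1) = (p+q+2+J)+1 from by ring, Nat.choose_succ_succ']
            congr 2 <;> omega
          have eA : (p+(q+1)+1+J).choose (p+(q+1)+1) = (p+q+2+J).choose (p+q+2) := by
            congr 1 <;> omega
          rw [eA] at *
          simp only [Nat.sub_self, Nat.add_zero, Nat.choose_self, Nat.mul_one]
          omega

open Finset in
lemma conv' (p q J : ℕ) : ∑ j ∈ range (J+1), (p+(J-j)).choose p * (q+j).choose q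
    = (p+q+1+J).choose (p+q+1) := by
  have h := conv q p J
  have h2 : ∑ j ∈ range (J+1), (p+(J-j)).choose p * (q+j).choose q
      = ∑ j ∈ range (J+1), (q+j).choose q * (p+(J-j)).choose p :=
    Finset.sum_congr rfl fun j _ => mul_comm _ _
  rw [h2, h, show q+p+1+J = p+q+1+J from by ring, show q+p+1 = p+q+1 from by ring]

open Finset in
lemma key_s12 (m n : ℕ) (hm : 1 ≤ m) (hn : 1 ≤ n) (s t : ℤ) (hst : s + m + n ≤ t) :
    ∑ u ∈ Finset.Icc (s + (n:ℤ)) (t - (m:ℤ)),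
      (t - u - 1).toNat.choose (m-1) * (u - s - 1).toNat.choose (n-1)
    = (t - s - 1).toNat.choose (m+n-1) := by
  set J : ℕ := (t - m - n - s).toNat with hJ
  have hmap : Finset.Icc (s + (n:ℤ)) (t - (m:ℤ))
      = Finset.map ⟨fun j : ℕ => s + n + j, (add_right_injective (s + (n:ℤ))).comp Nat.cast_injective⟩
          (Finset.range (J+1)) := by
    ext u
    simp only [Finset.mem_Icc, Finset.mem_map, Finset.mem_range, Function.Embedding.coeFn_mk]
    constructor
    · rintro ⟨h1, h2⟩
      exact ⟨(u - s - n).toNat, by omega, by omega⟩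
    · rintro ⟨j, hj, rfl⟩
      omega
  rw [hmap, Finset.sum_map]
  simp only [Function.Embedding.coeFn_mk]
  have step : ∀ j ∈ range (J+1),
      (t - (s + n + (j:ℤ)) - 1).toNat.choose (m-1) * ((s + n + (j:ℤ)) - s - 1).toNat.choose (n-1)
      = ((m-1)+(J-j)).choose (m-1) * ((n-1)+j).choose (n-1) := by
    intro j hj
    rw [Finset.mem_range] at hj
    congr 2 <;> omega
  rw [Finset.sum_congr rfl step, conv' (m-1) (n-1) J]
  congr 1 <;> omega

/-- Semigroup identity for integer-order Miller–Ross fractional sums: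
`_aΔ^{-m}(_aΔ^{-n} f)(t) = _aΔ^{-(m+n)} f(t)` for `t ≥ a + m + n`. -/
theorem millerRoss_semigroup (m n : ℕ) (hm : 1 ≤ m) (hn : 1 ≤ n) (a : ℤ)
    (f : ℤ → ℝ) (t : ℤ) (ht : a + m + n ≤ t) :
    millerRossSum a m (fun u => millerRossSum a n f u) t =
      millerRossSum a (m + n) f t := by
  unfold millerRossSum
  simp_rw [Finset.mul_sum]
  rw [Finset.sum_comm' (s := Finset.Icc a (t - (m:ℤ)))
      (t := fun u => Finset.Icc a (u - (n:ℤ)))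
      (t' := Finset.Icc a (t - ((m+n : ℕ):ℤ)))
      (s' := fun s => Finset.Icc (s + (n:ℤ)) (t - (m:ℤ)))
      (h := by
        intro u s
        simp only [Finset.mem_Icc]
        push_cast
        omega)]
  refine Finset.sum_congr rfl fun s hs => ?_
  rw [Finset.mem_Icc] at hs
  have hst : s + m + n ≤ t := by
    have := hs.2
    push_cast at this
    omega
  have hk := key_s12 m n hm hn s t hst
  calc ∑ u ∈ Finset.Icc (s + (n:ℤ)) (t - (m:ℤ)),
        ((t - u - 1).toNat.choose (m-1) : ℝ) * (((u - s - 1).toNat.choose (n-1) : ℝ) * f s)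
      = (∑ u ∈ Finset.Icc (s + (n:ℤ)) (t - (m:ℤ)),
          ((t - u - 1).toNat.choose (m-1) * (u - s - 1).toNat.choose (n-1) : ℕ) : ℝ) * f s := by
        rw [Finset.sum_mul]
        push_cast
        exact Finset.sum_congr rfl fun u _ => by ring
    _ = ((t - s - 1).toNat.choose (m+n-1) : ℝ) * f s := by rw [← Nat.cast_sum, hk]
end

section
/- For 1 < α < 2, define xₙ by x_{n+1} = x₀ + Δx₀·(n+1) - (K/Γ(α)) Σ_{s=0}^{n-1} (Γ(n-s+α-1)/Γ(n-s)) sin(x_{s+1}), and set pₙ = xₙ - x_{n-1} for n ≥ 1. Then pₙ satisfies pₙ = p₁ - (K/Γ(α-1)) Σ_{s=2}^{n} (Γ(n-s+α-1)/Γ(n-s+1)) sin(x_{s-1}) for all n ≥ 2, together with xₙ = x_{n-1} + pₙ. -/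
open Real Finset

private lemma gamma_diff (α : ℝ) (hα : 1 < α) (r : ℝ) (hr : 2 ≤ r) :
    Real.Gamma (r + α - 1) / Real.Gamma r - Real.Gamma (r + α - 2) / Real.Gamma (r - 1)
      = (α - 1) * (Real.Gamma (r + α - 2) / Real.Gamma r) := by
  have hpos : (0:ℝ) < r + α - 2 := by linarith
  have hr1 : (0:ℝ) < r - 1 := by linarith
  have e1 : Real.Gamma (r + α - 1) = (r + α - 2) * Real.Gamma (r + α - 2) := by
    have := Real.Gamma_add_one hpos.ne'
    rw [show r + α - 2 + 1 = r + α - 1 by ring] at this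
    exact this
  have e2 : Real.Gamma r = (r - 1) * Real.Gamma (r - 1) := by
    have := Real.Gamma_add_one hr1.ne'
    rw [show r - 1 + 1 = r by ring] at this
    exact this
  have hg1 : Real.Gamma (r - 1) ≠ 0 := (Real.Gamma_pos_of_pos hr1).ne'
  rw [e1, e2]
  field_simp
  ring

/-- For `1 < α < 2`, the explicit sum form of the fractional difference Caputo
Standard α-family of maps,
`x_{n+1} = x₀ + Δx₀(n+1) - (K/Γ(α)) Σ_{s=0}^{n-1} (Γ(n-s+α-1)/Γ(n-s)) sin(x_{s+1})`,
with momentum `pₙ = xₙ - x_{n-1}`, yields the 2D momentum form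
`pₙ = p₁ - (K/Γ(α-1)) Σ_{s=2}^{n} (Γ(n-s+α-1)/Γ(n-s+1)) sin(x_{s-1})` together
with `xₙ = x_{n-1} + pₙ`, for all `n ≥ 2`. -/
theorem fractional_difference_standard_momentum_form
    (α K x₀ Δx₀ : ℝ) (hα : 1 < α) (hα2 : α < 2) (x p : ℕ → ℝ)
    (hx0 : x 0 = x₀)
    (hx : ∀ n : ℕ, x (n + 1) =
      x₀ + Δx₀ * ((n : ℝ) + 1) -
        K / Real.Gamma α *
          ∑ s ∈ Finset.range n,
            (Real.Gamma ((n : ℝ) - (s : ℝ) + α - 1) / Real.Gamma ((n : ℝ) - (s : ℝ))) *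
              Real.sin (x (s + 1)))
    (hp : ∀ n : ℕ, 1 ≤ n → p n = x n - x (n - 1)) :
    ∀ n : ℕ, 2 ≤ n →
      (p n = p 1 -
        K / Real.Gamma (α - 1) *
          ∑ s ∈ Finset.Icc 2 n,
            (Real.Gamma ((n : ℝ) - (s : ℝ) + α - 1) / Real.Gamma ((n : ℝ) - (s : ℝ) + 1)) *
              Real.sin (x (s - 1))) ∧
      x n = x (n - 1) + p n := by
  intro n hn
  have hΓα : Real.Gamma α ≠ 0 := (Real.Gamma_pos_of_pos (by linarith)).ne'
  have hΓα1 : Real.Gamma (α - 1) ≠ 0 := (Real.Gamma_pos_of_pos (by linarith)).ne'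
  have hGa : Real.Gamma α = (α - 1) * Real.Gamma (α - 1) := by
    have h := Real.Gamma_add_one (show α - 1 ≠ 0 by intro h; linarith [sub_eq_zero.mp h])
    rw [show α - 1 + 1 = α by ring] at h
    exact h
  have hx1 : x 1 = x₀ + Δx₀ := by
    have := hx 0
    simpa using this
  have hp1 : p 1 = Δx₀ := by
    rw [hp 1 le_rfl, hx1]
    simp [hx0]
  obtain ⟨m, rfl⟩ : ∃ m, n = m + 2 := ⟨n - 2, by omega⟩
  constructor
  · -- main computation
    have hpn : p (m + 2) = x (m + 2) - x (m + 1) := by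
      have := hp (m + 2) (by omega)
      simpa using this
    rw [hpn, hx (m + 1), hx m, hp1]
    push_cast
    -- reindex the Icc sum
    have hIcc : ∑ s ∈ Finset.Icc 2 (m + 2),
        (Real.Gamma (((m:ℝ) + 2) - (s : ℝ) + α - 1) / Real.Gamma (((m:ℝ) + 2) - (s : ℝ) + 1)) *
          Real.sin (x (s - 1))
        = ∑ i ∈ Finset.range (m + 1),
        (Real.Gamma ((m:ℝ) - (i : ℝ) + α - 1) / Real.Gamma ((m:ℝ) - (i : ℝ) + 1)) *
          Real.sin (x (i + 1)) := by
      rw [← Finset.Ico_add_one_right_eq_Icc, Finset.sum_Ico_eq_sum_range]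
      refine Finset.sum_congr rfl fun i hi => ?_
      push_cast
      norm_num
      ring_nf
    rw [hIcc]
    -- split off last terms
    rw [Finset.sum_range_succ, Finset.sum_range_succ]
    have h1 : Real.Gamma ((m:ℝ) + 1 - (m:ℝ) + α - 1) = Real.Gamma α := by norm_num
    have h2 : Real.Gamma ((m:ℝ) + 1 - (m:ℝ)) = 1 := by norm_num [Real.Gamma_one]
    have h3 : Real.Gamma ((m:ℝ) - (m:ℝ) + α - 1) = Real.Gamma (α - 1) := by norm_num
    have h4 : Real.Gamma ((m:ℝ) - (m:ℝ) + 1) = 1 := by norm_num [Real.Gamma_one]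
    rw [h1, h2, h3, h4]
    have hsum : ∑ s ∈ Finset.range m,
        (Real.Gamma ((m:ℝ) + 1 - (s:ℝ) + α - 1) / Real.Gamma ((m:ℝ) + 1 - (s:ℝ))) *
          Real.sin (x (s + 1))
        - ∑ s ∈ Finset.range m,
        (Real.Gamma ((m:ℝ) - (s:ℝ) + α - 1) / Real.Gamma ((m:ℝ) - (s:ℝ))) *
          Real.sin (x (s + 1))
        = (α - 1) * ∑ s ∈ Finset.range m,
        (Real.Gamma ((m:ℝ) - (s:ℝ) + α - 1) / Real.Gamma ((m:ℝ) - (s:ℝ) + 1)) *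
          Real.sin (x (s + 1)) := by
      rw [← Finset.sum_sub_distrib, Finset.mul_sum]
      refine Finset.sum_congr rfl fun s hs => ?_
      have hs' : s < m := Finset.mem_range.mp hs
      have hr : (2:ℝ) ≤ (m:ℝ) + 1 - (s:ℝ) := by
        have : (s:ℝ) + 1 ≤ (m:ℝ) := by exact_mod_cast hs'
        linarith
      have hgd := gamma_diff α hα ((m:ℝ) + 1 - (s:ℝ)) hr
      rw [show (m:ℝ) + 1 - (s:ℝ) + α - 1 = (m:ℝ) + 1 - (s:ℝ) + α - 1 from rfl,
        show (m:ℝ) + 1 - (s:ℝ) + α - 2 = (m:ℝ) - (s:ℝ) + α - 1 by ring,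
        show (m:ℝ) + 1 - (s:ℝ) - 1 = (m:ℝ) - (s:ℝ) by ring] at hgd
      rw [show (m:ℝ) + 1 - (s:ℝ) = (m:ℝ) - (s:ℝ) + 1 by ring] at hgd ⊢
      rw [← sub_mul, hgd]
      ring
    have hΔ : ∀ A B : ℝ,
        x₀ + Δx₀ * ((m:ℝ) + 1 + 1) - K / Real.Gamma α * A
          - (x₀ + Δx₀ * ((m:ℝ) + 1) - K / Real.Gamma α * B)
        = Δx₀ - K / Real.Gamma α * (A - B) := by intros; ring
    rw [hΔ]
    set S1 := ∑ s ∈ Finset.range m,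
        (Real.Gamma ((m:ℝ) + 1 - (s:ℝ) + α - 1) / Real.Gamma ((m:ℝ) + 1 - (s:ℝ))) *
          Real.sin (x (s + 1)) with hS1
    set S2 := ∑ s ∈ Finset.range m,
        (Real.Gamma ((m:ℝ) - (s:ℝ) + α - 1) / Real.Gamma ((m:ℝ) - (s:ℝ))) *
          Real.sin (x (s + 1)) with hS2
    set T := ∑ s ∈ Finset.range m,
        (Real.Gamma ((m:ℝ) - (s:ℝ) + α - 1) / Real.Gamma ((m:ℝ) - (s:ℝ) + 1)) *
          Real.sin (x (s + 1)) with hT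
    rw [show S1 + Real.Gamma α / 1 * Real.sin (x (m + 1)) - S2
        = (S1 - S2) + Real.Gamma α * Real.sin (x (m + 1)) by ring, hsum, hGa]
    have hα1ne : α - 1 ≠ 0 := by intro h; linarith [sub_eq_zero.mp h]
    field_simp
  · have := hp (m + 2) (by omega)
    show x (m + 2) = x (m + 1) + p (m + 2)
    have h2 : p (m + 2) = x (m + 2) - x (m + 1) := this
    linarith
end
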